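/- Let T be a triangulation of a convex polygon π with n ≥ 4 vertices and let v be a vertex of π incident to exactly n−3−k interior edges of T. Let U be a triangulation in Ω(T,v) and let a_1, …, a_k be a shelling of T at v such that for each i with 1 ≤ i ≤ k, the vertex a_i is incident to at least two interior edges of U whose other endpoint is not among a_i, …, a_k. If x is equal to a_k or to the vertex of π that immediately precedes a_k clockwise, then U∖x belongs to Ω(T∖x, v). -/

import Mathlib

/-!
Combinatorial model of a convex polygon with `n` vertices, labeled by `Fin n`
in clockwise cyclic order.
-/

/-- `c` lies strictly inside the clockwise arc going from `a` to `b`. -/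
def Between (n : ℕ) (a c b : Fin n) : Prop :=
  0 < (c - a).val ∧ (c - a).val < (b - a).val

/-- Two edges on the polygon cross: their endpoints strictly interleave
in the clockwise cyclic order. -/
def Cross (n : ℕ) (e f : Finset (Fin n)) : Prop :=
  ∃ a b c d : Fin n, e = {a, b} ∧ f = {c, d} ∧ Between n a c b ∧ Between n b d a

/-- The vertex immediately following `i` clockwise. -/
def nextV (n : ℕ) (i : Fin n) : Fin n :=
  ⟨(i.val + 1) % n, Nat.mod_lt _ i.pos⟩

/-- Boundary edges of the polygon: the pairs of cyclically consecutive vertices. -/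
def IsBoundary (n : ℕ) (e : Finset (Fin n)) : Prop :=
  ∃ i : Fin n, e = {i, nextV n i}

/-- `E` is a triangulation of the convex (sub)polygon on the vertex set `W`:
an inclusion-maximal set of pairwise non-crossing edges on `W`. -/
def IsTriangulationOn (n : ℕ) (W : Finset (Fin n)) (E : Finset (Finset (Fin n))) : Prop :=
  (∀ e ∈ E, e ⊆ W) ∧ (∀ e ∈ E, e.card = 2) ∧
    (∀ e ∈ E, ∀ f ∈ E, ¬ Cross n e f) ∧
    (∀ e : Finset (Fin n), e ⊆ W → e.card = 2 → (∀ f ∈ E, ¬ Cross n e f) → e ∈ E)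

/-- A triangulation of the convex polygon with `n` vertices. -/
structure Triangulation (n : ℕ) where
  edges : Finset (Finset (Fin n))
  isTri : IsTriangulationOn n Finset.univ edges

theorem Triangulation.edges_injective (n : ℕ) :
    Function.Injective (Triangulation.edges (n := n)) := by
  rintro ⟨e, he⟩ ⟨f, hf⟩ h
  dsimp at h
  subst h
  rfl

/-- The flip-graph of the polygon: two triangulations are adjacent exactly when
they differ by a single edge. -/
def flipGraph (n : ℕ) : SimpleGraph (Triangulation n) where
  Adj T U := T ≠ U ∧ (T.edges \ U.edges).card = 1 ∧ (U.edges \ T.edges).card = 1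
  symm := ⟨fun T U h => ⟨h.1.symm, h.2.2, h.2.1⟩⟩
  loopless := ⟨fun T h => h.1 rfl⟩

noncomputable instance (n : ℕ) : Fintype (Triangulation n) :=
  Fintype.ofInjective Triangulation.edges (Triangulation.edges_injective n)

open Classical in
/-- The number of interior edges of `T` incident to the vertex `v`. -/
noncomputable def interiorDeg (n : ℕ) (T : Triangulation n) (v : Fin n) : ℕ :=
  (T.edges.filter fun e => v ∈ e ∧ ¬ IsBoundary n e).card

/-- `T` has an ear in `v`: no interior edge of `T` is incident to `v`. -/
def HasEar (n : ℕ) (T : Triangulation n) (v : Fin n) : Prop :=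
  ∀ e ∈ T.edges, ¬ IsBoundary n e → v ∉ e

/-- The eccentricity of `T` in the flip-graph: the maximum of `d(T,U)` over all
triangulations `U`. -/
noncomputable def eccentricity (n : ℕ) (T : Triangulation n) : ℕ :=
  Finset.univ.sup fun U : Triangulation n => (flipGraph n).dist T U

/-- The monotone relabeling of the vertices of the polygon after the deletion of
the vertex `a`. -/
def collapse (n : ℕ) (a v : Fin (n + 2)) : Fin (n + 1) :=
  ⟨if v.val < a.val then v.val else v.val - 1, by
    have := v.isLt; have := a.isLt; split <;> omega⟩

/-- The edge set of the triangulation `T∖a` obtained by deleting the vertex `a` from a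
triangulation with edge set `E`: remove the boundary edge `{a, a+1}`, replace `a` by
`a+1` in every remaining edge, and relabel the remaining vertices monotonically. -/
def deleteEdges (n : ℕ) (a : Fin (n + 2)) (E : Finset (Finset (Fin (n + 2)))) :
    Finset (Finset (Fin (n + 1))) :=
  (E.erase {a, a + 1}).image fun e =>
    e.image fun v => collapse n a (if v = a then a + 1 else v)

/-- `c` is an apex of a triangle of `X` on the boundary edge `{a,b}`. -/
def ApexOf (n : ℕ) (X : Triangulation n) (a b c : Fin n) : Prop :=
  c ≠ a ∧ c ≠ b ∧ ({a, c} : Finset (Fin n)) ∈ X.edges ∧ ({b, c} : Finset (Fin n)) ∈ X.edges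

/-- The flip between the adjacent triangulations `X` and `Y` is incident to `{a,b}`:
it affects the triangle containing `{a,b}`. -/
def FlipIncident (n : ℕ) (X Y : Triangulation n) (a b : Fin n) : Prop :=
  ∃ c : Fin n, (ApexOf n X a b c ∧ ¬ ApexOf n Y a b c) ∨
    (ApexOf n Y a b c ∧ ¬ ApexOf n X a b c)

open Classical in
/-- The number of flips incident to `{a,b}` along the walk `p` in the flip-graph. -/
noncomputable def flipsIncident {n : ℕ} {T U : Triangulation n}
    (p : (flipGraph n).Walk T U) (a b : Fin n) : ℕ :=
  (p.darts.filter fun d => decide (FlipIncident n d.toProd.1 d.toProd.2 a b)).length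

open Classical in
/-- `a 0, …, a (k-1)` is a shelling of `T` at `v`: an ordering of the vertices not
joined to `v` by an edge of `T` such that, for every `i`, the edges of `T` incident
to none of `a i, …, a (k-1)` form a triangulation of a convex polygon. -/
def IsShelling (n k : ℕ) (T : Triangulation n) (v : Fin n) (a : Fin k → Fin n) : Prop :=
  Function.Injective a ∧
    (∀ w : Fin n, (∃ i, a i = w) ↔ w ≠ v ∧ ({v, w} : Finset (Fin n)) ∉ T.edges) ∧
    ∀ i : Fin k,
      IsTriangulationOn n (Finset.univ.filter fun w => ∀ j, i ≤ j → w ≠ a j)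
        (T.edges.filter fun e => ∀ j, i ≤ j → a j ∉ e)

/-- `a i` is incident to at least two interior edges of `U` whose other vertex is not
among `a i, …, a (k-1)`. -/
def GoodAt (n k : ℕ) (U : Triangulation n) (a : Fin k → Fin n) (i : Fin k) : Prop :=
  ∃ e₁ e₂ : Finset (Fin n), e₁ ∈ U.edges ∧ e₂ ∈ U.edges ∧ e₁ ≠ e₂ ∧
    ¬ IsBoundary n e₁ ∧ ¬ IsBoundary n e₂ ∧ a i ∈ e₁ ∧ a i ∈ e₂ ∧
    (∀ w ∈ e₁, w ≠ a i → ∀ j, i ≤ j → w ≠ a j) ∧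
    (∀ w ∈ e₂, w ≠ a i → ∀ j, i ≤ j → w ≠ a j)

/-- The set `Ω(T,v)`: triangulations `U` with an ear in `v` such that, for some
shelling `a` of `T` at `v`, every `a i` is incident to at least two interior edges of
`U` whose other vertex is not among `a i, …, a (k-1)`. -/
def Omega (n k : ℕ) (T : Triangulation n) (v : Fin n) : Set (Triangulation n) :=
  {U | HasEar n U v ∧ ∃ a : Fin k → Fin n, IsShelling n k T v a ∧ ∀ i, GoodAt n k U a i}

/-- The set `Ω̃(T,a,b)`: triangulations `U` such that every interior edge shared by `T`
and `U` is incident to `a` or to `b`, and every vertex on the left of `(a,b)` is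
incident to at least two interior edges of `U`. -/
def OmegaTilde (n : ℕ) (T : Triangulation n) (a b : Fin n) : Set (Triangulation n) :=
  {U | (∀ e ∈ T.edges, e ∈ U.edges → ¬ IsBoundary n e → a ∈ e ∨ b ∈ e) ∧
    ∀ c : Fin n, Between n a c b → 2 ≤ interiorDeg n U c}

/-- `(a,b,c)` is a clockwise-oriented central triangle of `T`: the oriented edges
`(a,b)`, `(b,c)` and `(c,a)` have length at most `n/2` and `{a,b}`, `{b,c}`, `{a,c}`
are edges of `T`. -/
def CentralTriangle (n : ℕ) (T : Triangulation n) (a b c : Fin n) : Prop :=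
  2 * (b - a).val ≤ n ∧ 2 * (c - b).val ≤ n ∧ 2 * (a - c).val ≤ n ∧
    ({a, b} : Finset (Fin n)) ∈ T.edges ∧ ({b, c} : Finset (Fin n)) ∈ T.edges ∧
    ({a, c} : Finset (Fin n)) ∈ T.edges


-- ===== auxiliary lemmas =====

lemma pair_eq_pair_iff {α : Type*} [DecidableEq α] {a b c d : α} :
    ({a, b} : Finset α) = {c, d} ↔ (a = c ∧ b = d) ∨ (a = d ∧ b = c) := by
  constructor
  · intro h
    have ha : a ∈ ({c, d} : Finset α) := h ▸ by simp
    have hb : b ∈ ({c, d} : Finset α) := h ▸ by simp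
    have hc : c ∈ ({a, b} : Finset α) := h ▸ by simp
    have hd : d ∈ ({a, b} : Finset α) := h ▸ by simp
    simp only [Finset.mem_insert, Finset.mem_singleton] at ha hb hc hd
    rcases ha with rfl | rfl <;> rcases hb with rfl | rfl <;> tauto
  · rintro (⟨rfl, rfl⟩ | ⟨rfl, rfl⟩)
    · rfl
    · exact Finset.pair_comm _ _

lemma fin_sub_val {N : ℕ} (a b : Fin N) :
    (a - b).val = if b.val ≤ a.val then a.val - b.val else a.val + N - b.val := by
  have ha := a.isLt
  have hb := b.isLt
  rw [Fin.sub_def]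
  simp only
  rcases le_or_gt b.val a.val with h | h
  · rw [if_pos h]
    have heq : N - b.val + a.val = (a.val - b.val) + N := by omega
    rw [heq, Nat.add_mod_right, Nat.mod_eq_of_lt (by omega)]
  · rw [if_neg (by omega), Nat.mod_eq_of_lt (by omega)]
    omega

lemma fin_add_one_val {M : ℕ} (hM : 1 ≤ M) (a : Fin (M + 1)) :
    (a + 1).val = if a.val + 1 = M + 1 then 0 else a.val + 1 := by
  have ha := a.isLt
  have h1 : ((1 : Fin (M + 1))).val = 1 := by
    rw [Fin.val_one', Nat.mod_eq_of_lt (by omega)]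
  rw [Fin.val_add, h1]
  rcases eq_or_ne (a.val + 1) (M + 1) with h | h
  · rw [if_pos h, h, Nat.mod_self]
  · rw [if_neg h, Nat.mod_eq_of_lt (by omega)]

lemma between_iff {N : ℕ} (a c b : Fin N) :
    Between N a c b ↔ (a.val < c.val ∧ c.val < b.val) ∨ (c.val < b.val ∧ b.val < a.val)
      ∨ (b.val < a.val ∧ a.val < c.val) := by
  have ha := a.isLt; have hb := b.isLt; have hc := c.isLt
  unfold Between
  rw [fin_sub_val, fin_sub_val]
  split_ifs <;> omega

lemma cross_symm {N : ℕ} {e f : Finset (Fin N)} (h : Cross N e f) : Cross N f e := by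
  obtain ⟨a, b, c, d, he, hf, h1, h2⟩ := h
  refine ⟨c, d, b, a, hf, by rw [he]; exact Finset.pair_comm a b, ?_, ?_⟩ <;>
    · rw [between_iff] at *
      omega

lemma cross_not_shared {N : ℕ} {e f : Finset (Fin N)} (h : Cross N e f)
    {w : Fin N} (hw1 : w ∈ e) (hw2 : w ∈ f) : False := by
  obtain ⟨a, b, c, d, rfl, rfl, h1, h2⟩ := h
  rw [between_iff] at h1 h2
  simp only [Finset.mem_insert, Finset.mem_singleton] at hw1 hw2
  rcases hw1 with rfl | rfl <;> rcases hw2 with rfl | rfl <;> omega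

lemma isBoundary_iff {N : ℕ} (e : Finset (Fin N)) :
    IsBoundary N e ↔ ∃ a b : Fin N, e = {a, b} ∧ (a.val + 1) % N = b.val := by
  constructor
  · rintro ⟨i, rfl⟩
    exact ⟨i, nextV N i, rfl, rfl⟩
  · rintro ⟨a, b, rfl, hab⟩
    exact ⟨a, by rw [show nextV N a = b from Fin.ext hab]⟩

lemma boundary_not_cross {N : ℕ} {e f : Finset (Fin N)} (h : IsBoundary N e) :
    ¬ Cross N e f := by
  rw [isBoundary_iff] at h
  obtain ⟨p, q, rfl, hpq⟩ := h
  rintro ⟨a, b, c, d, he, hf, h1, h2⟩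
  have hp := p.isLt; have hq := q.isLt
  have hmod : (p.val + 1) % N = if p.val + 1 = N then 0 else p.val + 1 := by
    split_ifs with h
    · rw [h, Nat.mod_self]
    · exact Nat.mod_eq_of_lt (by omega)
  rw [hmod] at hpq
  rw [pair_eq_pair_iff] at he
  rw [between_iff] at h1 h2
  rcases he with ⟨rfl, rfl⟩ | ⟨rfl, rfl⟩ <;> split_ifs at hpq <;> omega

lemma boundary_card_two {N : ℕ} (hN : 2 ≤ N) {e : Finset (Fin N)} (h : IsBoundary N e) :
    e.card = 2 := by
  rw [isBoundary_iff] at h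
  obtain ⟨p, q, rfl, hpq⟩ := h
  have hp := p.isLt; have hq := q.isLt
  refine Finset.card_pair ?_
  intro hh
  rw [hh] at hpq
  rcases Nat.lt_or_ge (q.val + 1) N with h | h
  · rw [Nat.mod_eq_of_lt h] at hpq; omega
  · have : q.val + 1 = N := by omega
    rw [this, Nat.mod_self] at hpq; omega

lemma fin_val_ne {N : ℕ} {a b : Fin N} (h : a ≠ b) : a.val ≠ b.val :=
  fun hh => h (Fin.ext hh)

lemma nat_addone_mod (A M : ℕ) (h : A < M) :
    (A + 1) % M = if A + 1 = M then 0 else A + 1 := by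
  split_ifs with h'
  · rw [h', Nat.mod_self]
  · exact Nat.mod_eq_of_lt (by omega)

lemma cross_pair_iff {N : ℕ} {a b c d : Fin N} :
    Cross N {a, b} {c, d} ↔
      (Between N a c b ∧ Between N b d a) ∨ (Between N a d b ∧ Between N b c a) := by
  constructor
  · rintro ⟨p, q, r, s, he, hf, B1, B2⟩
    rw [pair_eq_pair_iff] at he hf
    rcases he with ⟨rfl, rfl⟩ | ⟨rfl, rfl⟩ <;> rcases hf with ⟨rfl, rfl⟩ | ⟨rfl, rfl⟩
    · exact Or.inl ⟨B1, B2⟩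
    · exact Or.inr ⟨B1, B2⟩
    · exact Or.inr ⟨B2, B1⟩
    · exact Or.inl ⟨B2, B1⟩
  · rintro (⟨B1, B2⟩ | ⟨B1, B2⟩)
    · exact ⟨a, b, c, d, rfl, rfl, B1, B2⟩
    · exact ⟨a, b, d, c, rfl, Finset.pair_comm c d, B1, B2⟩

lemma isBoundary_pair_succ {M : ℕ} (hM : 1 ≤ M) (i : Fin (M + 1)) :
    IsBoundary (M + 1) {i, i + 1} := by
  rw [isBoundary_iff]
  refine ⟨i, i + 1, rfl, ?_⟩
  rw [fin_add_one_val hM, nat_addone_mod _ _ i.isLt]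

lemma collapse_val (n : ℕ) (x u : Fin (n + 2)) :
    (collapse n x u).val = if u.val < x.val then u.val else u.val - 1 := rfl

lemma collapse_eq_iff {n : ℕ} {x u w : Fin (n + 2)} (hu : u ≠ x) (hw : w ≠ x) :
    collapse n x u = collapse n x w ↔ u = w := by
  have h1 := fin_val_ne hu
  have h2 := fin_val_ne hw
  constructor
  · intro h
    have := congrArg Fin.val h
    rw [collapse_val, collapse_val] at this
    apply Fin.ext
    split_ifs at this <;> omega
  · intro h; rw [h]

lemma fin_succ_ne_self {n : ℕ} (x : Fin (n + 2)) : x + 1 ≠ x := by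
  intro h
  have := congrArg Fin.val h
  rw [fin_add_one_val (by omega)] at this
  have := x.isLt
  split_ifs at * <;> omega

lemma between_collapse {n : ℕ} {x a c b : Fin (n + 2)} (ha : a ≠ x) (hc : c ≠ x)
    (hb : b ≠ x) :
    Between (n + 2) a c b ↔
      Between (n + 1) (collapse n x a) (collapse n x c) (collapse n x b) := by
  have h1 := fin_val_ne ha
  have h2 := fin_val_ne hc
  have h3 := fin_val_ne hb
  have := a.isLt; have := b.isLt; have := c.isLt; have := x.isLt
  rw [between_iff, between_iff]
  simp only [collapse_val]
  split_ifs <;> omega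

lemma between_subst_left {n : ℕ} {x p q : Fin (n + 2)} (hp : p ≠ x) (hp1 : p ≠ x + 1)
    (hq : q ≠ x) (hq1 : q ≠ x + 1) :
    Between (n + 2) x p q ↔ Between (n + 2) (x + 1) p q := by
  have h1 := fin_val_ne hp
  have h2 := fin_val_ne hp1
  have h3 := fin_val_ne hq
  have h4 := fin_val_ne hq1
  have h5 : (x + 1).val = if x.val + 1 = n + 2 then 0 else x.val + 1 :=
    fin_add_one_val (by omega) x
  have := p.isLt; have := q.isLt; have := x.isLt
  rw [between_iff, between_iff]
  split_ifs at h5 <;> omega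

lemma between_subst_right {n : ℕ} {x p q : Fin (n + 2)} (hp : p ≠ x) (hp1 : p ≠ x + 1)
    (hq : q ≠ x) (hq1 : q ≠ x + 1) :
    Between (n + 2) p q x ↔ Between (n + 2) p q (x + 1) := by
  have h1 := fin_val_ne hp
  have h2 := fin_val_ne hp1
  have h3 := fin_val_ne hq
  have h4 := fin_val_ne hq1
  have h5 : (x + 1).val = if x.val + 1 = n + 2 then 0 else x.val + 1 :=
    fin_add_one_val (by omega) x
  have := p.isLt; have := q.isLt; have := x.isLt
  rw [between_iff, between_iff]
  split_ifs at h5 <;> omega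

lemma cross_collapse {n : ℕ} {x p q r s : Fin (n + 2)} (hp : p ≠ x) (hq : q ≠ x)
    (hr : r ≠ x) (hs : s ≠ x) :
    Cross (n + 2) ({p, q} : Finset _) {r, s} ↔
      Cross (n + 1) ({collapse n x p, collapse n x q} : Finset _)
        {collapse n x r, collapse n x s} := by
  rw [cross_pair_iff, cross_pair_iff]
  rw [between_collapse hp hr hq, between_collapse hq hs hp,
    between_collapse hp hs hq, between_collapse hq hr hp]

lemma cross_subst_pair {n : ℕ} {x u r s : Fin (n + 2)} (hu : u ≠ x) (hu1 : u ≠ x + 1)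
    (hr : r ≠ x) (hr1 : r ≠ x + 1) (hs : s ≠ x) (hs1 : s ≠ x + 1) :
    Cross (n + 2) ({x, u} : Finset _) {r, s} ↔ Cross (n + 2) ({x + 1, u} : Finset _) {r, s} := by
  rw [cross_pair_iff, cross_pair_iff]
  rw [between_subst_left hr hr1 hu hu1, between_subst_right hu hu1 hs hs1,
    between_subst_left hs hs1 hu hu1, between_subst_right hu hu1 hr hr1]

def phi (n : ℕ) (x : Fin (n + 2)) (w : Fin (n + 2)) : Fin (n + 1) :=
  collapse n x (if w = x then x + 1 else w)

lemma mem_deleteEdges {n : ℕ} {x : Fin (n + 2)} {E : Finset (Finset (Fin (n + 2)))}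
    {e' : Finset (Fin (n + 1))} :
    e' ∈ deleteEdges n x E ↔
      ∃ e, e ∈ E ∧ e ≠ {x, x + 1} ∧ e' = e.image (phi n x) := by
  unfold deleteEdges
  simp only [Finset.mem_image, Finset.mem_erase]
  constructor
  · rintro ⟨f, ⟨hne, hf⟩, rfl⟩
    exact ⟨f, hf, hne, rfl⟩
  · rintro ⟨f, hf, hne, rfl⟩
    exact ⟨f, ⟨hne, hf⟩, rfl⟩

lemma phi_of_ne {n : ℕ} {x w : Fin (n + 2)} (h : w ≠ x) :
    phi n x w = collapse n x w := by
  rw [phi, if_neg h]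

lemma phi_eq_phi {n : ℕ} {x w u : Fin (n + 2)} :
    phi n x w = phi n x u ↔
      w = u ∨ (w = x ∧ u = x + 1) ∨ (w = x + 1 ∧ u = x) := by
  have hxx := fin_succ_ne_self x
  unfold phi
  rcases eq_or_ne w x with hw | hw <;> rcases eq_or_ne u x with hu | hu
  · rw [if_pos hw, if_pos hu, hw, hu]
    simp
  · rw [if_pos hw, if_neg hu, collapse_eq_iff hxx hu]
    constructor
    · intro h; exact Or.inr (Or.inl ⟨hw, h.symm⟩)
    · rintro (h | ⟨-, h⟩ | ⟨h, -⟩)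
      · exact absurd (hw ▸ h.symm : u = x) hu
      · exact h.symm
      · exact absurd (h.symm.trans hw) hxx
  · rw [if_neg hw, if_pos hu, collapse_eq_iff hw hxx]
    constructor
    · intro h; exact Or.inr (Or.inr ⟨h, hu⟩)
    · rintro (h | ⟨h, -⟩ | ⟨h, -⟩)
      · exact absurd (h.symm ▸ hu : w = x) hw
      · exact absurd h hw
      · exact h
  · rw [if_neg hw, if_neg hu, collapse_eq_iff hw hu]
    constructor
    · exact fun h => Or.inl h
    · rintro (h | ⟨h, -⟩ | ⟨-, h⟩)
      · exact h
      · exact absurd h hw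
      · exact absurd h hu

def unc {n : ℕ} (x : Fin (n + 2)) (w : Fin (n + 1)) : Fin (n + 2) :=
  if h : w.val < x.val then ⟨w.val, by omega⟩ else ⟨w.val + 1, by have := w.isLt; omega⟩

lemma unc_ne {n : ℕ} (x : Fin (n + 2)) (w : Fin (n + 1)) : unc x w ≠ x := by
  unfold unc
  split_ifs with h <;> (intro hh; have := congrArg Fin.val hh; simp at this; omega)

lemma collapse_unc {n : ℕ} (x : Fin (n + 2)) (w : Fin (n + 1)) :
    collapse n x (unc x w) = w := by
  apply Fin.ext
  rw [collapse_val]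
  unfold unc
  have := w.isLt
  split_ifs <;> simp at * <;> omega

lemma phi_unc {n : ℕ} (x : Fin (n + 2)) (w : Fin (n + 1)) :
    phi n x (unc x w) = w := by
  rw [phi_of_ne (unc_ne x w), collapse_unc]

lemma image_pair' {α β : Type*} [DecidableEq α] [DecidableEq β] (f : α → β) (a b : α) :
    ({a, b} : Finset α).image f = {f a, f b} := by
  rw [Finset.image_insert, Finset.image_singleton]

lemma boundary_phi {n : ℕ} {x : Fin (n + 2)} {e : Finset (Fin (n + 2))}
    (hb : IsBoundary (n + 2) e) (hne : e ≠ {x, x + 1}) :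
    IsBoundary (n + 1) (e.image (phi n x)) := by
  rw [isBoundary_iff] at hb
  obtain ⟨p, q, rfl, hpq⟩ := hb
  rw [image_pair']
  rw [isBoundary_iff]
  refine ⟨phi n x p, phi n x q, rfl, ?_⟩
  have hP := p.isLt; have hQ := q.isLt; have hX := x.isLt
  have hadd : (x + 1).val = if x.val + 1 = n + 2 then 0 else x.val + 1 :=
    fin_add_one_val (by omega) x
  rw [nat_addone_mod _ _ hP] at hpq
  have hpx : p ≠ x := by
    intro h
    apply hne
    subst h
    have : q = p + 1 := by
      apply Fin.ext
      rw [fin_add_one_val (by omega)]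
      split_ifs at hpq ⊢ <;> omega
    rw [this]
  rcases eq_or_ne q x with rfl | hqx
  · -- e = {q - 1, q}; image is {collapse p, collapse (q+1)}
    rw [phi_of_ne hpx, phi, if_pos rfl]
    rw [collapse_val, collapse_val]
    have h1 := fin_val_ne hpx
    rw [nat_addone_mod]
    · split_ifs at * <;> omega
    · split_ifs <;> omega
  · rw [phi_of_ne hpx, phi_of_ne hqx]
    rw [collapse_val, collapse_val]
    have h1 := fin_val_ne hpx
    have h2 := fin_val_ne hqx
    rw [nat_addone_mod]
    · split_ifs at * <;> omega
    · split_ifs <;> omega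

lemma boundary_collapse_rev {n : ℕ} {x p q : Fin (n + 2)} (hp : p ≠ x) (hq : q ≠ x)
    (hpq : p ≠ q)
    (h : IsBoundary (n + 1) ({collapse n x p, collapse n x q} : Finset _)) :
    IsBoundary (n + 2) ({p, q} : Finset _) ∨ ({p, q} : Finset _) = {x - 1, x + 1} := by
  have hP := p.isLt; have hQ := q.isLt; have hX := x.isLt
  have h1 := fin_val_ne hp
  have h2 := fin_val_ne hq
  have hadd : (x + 1).val = if x.val + 1 = n + 2 then 0 else x.val + 1 :=
    fin_add_one_val (by omega) x
  have hone : ((1 : Fin (n + 2))).val = 1 := by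
    rw [Fin.val_one', Nat.mod_eq_of_lt (by omega)]
  have hsub : (x - 1).val = if 1 ≤ x.val then x.val - 1 else n + 1 := by
    rw [fin_sub_val, hone]
    split_ifs <;> omega
  -- val-level adjacency fact
  have key : ∀ P Q : Fin (n + 2), P ≠ x → Q ≠ x →
      ((collapse n x P).val + 1) % (n + 1) = (collapse n x Q).val →
      ((P.val + 1) % (n + 2) = Q.val ∨
        ((P.val + 1) % (n + 2) = x.val ∧ (x.val + 1) % (n + 2) = Q.val)) := by
    intro P Q hPx hQx hadj
    have hP' := P.isLt; have hQ' := Q.isLt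
    have h1' := fin_val_ne hPx
    have h2' := fin_val_ne hQx
    rw [collapse_val, collapse_val] at hadj
    have hlt : (if P.val < x.val then P.val else P.val - 1) < n + 1 := by
      split_ifs <;> omega
    rw [nat_addone_mod _ _ hlt] at hadj
    rw [nat_addone_mod _ _ hP', nat_addone_mod _ _ hX]
    split_ifs at hadj ⊢ <;> omega
  rw [isBoundary_iff] at h
  obtain ⟨A, B, hAB, hadj⟩ := h
  rw [pair_eq_pair_iff] at hAB
  rcases hAB with ⟨hA, hB⟩ | ⟨hA, hB⟩
  · rw [← hA, ← hB] at hadj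
    rcases key p q hp hq hadj with hk | ⟨hk1, hk2⟩
    · left
      rw [isBoundary_iff]
      refine ⟨p, q, rfl, ?_⟩
      exact hk
    · right
      have hp' : p = x - 1 := by
        apply Fin.ext
        rw [hsub]
        rw [nat_addone_mod _ _ hP] at hk1
        split_ifs at hk1 ⊢ <;> omega
      have hq' : q = x + 1 := by
        apply Fin.ext
        rw [hadd]
        rw [nat_addone_mod _ _ hX] at hk2
        split_ifs at hk2 ⊢ <;> omega
      rw [hp', hq']
  · rw [← hA, ← hB] at hadj
    rcases key q p hq hp hadj with hk | ⟨hk1, hk2⟩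
    · left
      rw [isBoundary_iff]
      exact ⟨q, p, Finset.pair_comm p q, hk⟩
    · right
      have hq' : q = x - 1 := by
        apply Fin.ext
        rw [hsub]
        rw [nat_addone_mod _ _ hQ] at hk1
        split_ifs at hk1 ⊢ <;> omega
      have hp' : p = x + 1 := by
        apply Fin.ext
        rw [hadd]
        rw [nat_addone_mod _ _ hX] at hk2
        split_ifs at hk2 ⊢ <;> omega
      rw [hp', hq', Finset.pair_comm]

lemma boundary_mem_tri {N : ℕ} (hN : 2 ≤ N) (T : Triangulation N)
    {e : Finset (Fin N)} (h : IsBoundary N e) : e ∈ T.edges :=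
  T.isTri.2.2.2 e (Finset.subset_univ e) (boundary_card_two hN h)
    (fun _ _ => boundary_not_cross h)

lemma edge_rep {N : ℕ} {e : Finset (Fin N)} (hcard : e.card = 2) {w : Fin N}
    (hw : w ∈ e) : ∃ u, u ≠ w ∧ e = {w, u} := by
  obtain ⟨p, q, hpq, rfl⟩ := Finset.card_eq_two.1 hcard
  simp only [Finset.mem_insert, Finset.mem_singleton] at hw
  rcases hw with rfl | rfl
  · exact ⟨q, hpq.symm, rfl⟩
  · exact ⟨p, hpq, Finset.pair_comm p w⟩

lemma fin_sub_one_val {n : ℕ} (x : Fin (n + 2)) :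
    (x - 1).val = if 1 ≤ x.val then x.val - 1 else n + 1 := by
  have hone : ((1 : Fin (n + 2))).val = 1 := by
    rw [Fin.val_one', Nat.mod_eq_of_lt (by omega)]
  rw [fin_sub_val, hone]
  have := x.isLt
  split_ifs <;> omega

lemma boundary_pair_cases {M : ℕ} (hM : 1 ≤ M) {A B : Fin (M + 1)}
    (h : IsBoundary (M + 1) ({A, B} : Finset _)) (hAB : A ≠ B) :
    B = A + 1 ∨ A = B + 1 := by
  rw [isBoundary_iff] at h
  obtain ⟨p, q, hpq, hadj⟩ := h
  rw [pair_eq_pair_iff] at hpq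
  rcases hpq with ⟨hA, hB⟩ | ⟨hA, hB⟩
  · left
    apply Fin.ext
    rw [fin_add_one_val hM, hA, hB, ← hadj, nat_addone_mod _ _ p.isLt]
  · right
    apply Fin.ext
    rw [fin_add_one_val hM, hA, hB, ← hadj, nat_addone_mod _ _ p.isLt]

lemma cross_to_collapse_aux {n : ℕ} {x q r s : Fin (n + 2)}
    (hq : q ≠ x) (hq1 : q ≠ x + 1) (hr : r ≠ x) (hr1 : r ≠ x + 1)
    (hs : s ≠ x) (hs1 : s ≠ x + 1)
    (h : Cross (n + 2) ({x, q} : Finset _) {r, s}) :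
    Cross (n + 1) ({phi n x x, phi n x q} : Finset _) {phi n x r, phi n x s} := by
  have hxx1 := fin_succ_ne_self x
  have h2 := (cross_subst_pair hq hq1 hr hr1 hs hs1).1 h
  have h3 := (cross_collapse hxx1 hq hr hs).1 h2
  simp only [phi, if_pos rfl, if_neg hq, if_neg hr, if_neg hs]
  exact h3

lemma cross_to_collapse {n : ℕ} {x p q r s : Fin (n + 2)}
    (hp1 : p ≠ x + 1) (hq1 : q ≠ x + 1) (hr1 : r ≠ x + 1) (hs1 : s ≠ x + 1)
    (hpq : ¬ (p = x ∧ q = x)) (hrs : ¬ (r = x ∧ s = x))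
    (h : Cross (n + 2) ({p, q} : Finset _) {r, s}) :
    Cross (n + 1) ({phi n x p, phi n x q} : Finset _) {phi n x r, phi n x s} := by
  by_cases hpx : p = x
  · have hqx : q ≠ x := fun hh => hpq ⟨hpx, hh⟩
    by_cases hrx : r = x
    · exact ((cross_not_shared (w := x) h (by rw [hpx]; exact Finset.mem_insert_self x {q})
        (by rw [hrx]; exact Finset.mem_insert_self x {s}))).elim
    · by_cases hsx : s = x
      · exact ((cross_not_shared (w := x) h (by rw [hpx]; exact Finset.mem_insert_self x {q})
          (by rw [hsx]; simp))).elim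
      · rw [hpx] at h ⊢
        exact cross_to_collapse_aux hqx hq1 hrx hr1 hsx hs1 h
  · by_cases hqx : q = x
    · by_cases hrx : r = x
      · exact ((cross_not_shared (w := x) h (by rw [hqx]; simp) (by rw [hrx]; simp))).elim
      · by_cases hsx : s = x
        · exact ((cross_not_shared (w := x) h (by rw [hqx]; simp) (by rw [hsx]; simp))).elim
        · rw [hqx] at h ⊢
          rw [Finset.pair_comm p x] at h
          rw [Finset.pair_comm (phi n x p) (phi n x x)]
          exact cross_to_collapse_aux hpx hp1 hrx hr1 hsx hs1 h
    · by_cases hrx : r = x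
      · have hsx : s ≠ x := fun hh => hrs ⟨hrx, hh⟩
        have h' := cross_symm h
        rw [hrx] at h' ⊢
        exact cross_symm (cross_to_collapse_aux hsx hs1 hpx hp1 hqx hq1 h')
      · by_cases hsx : s = x
        · have h' := cross_symm h
          rw [hsx] at h' ⊢
          rw [Finset.pair_comm r x] at h'
          rw [Finset.pair_comm (phi n x r) (phi n x x)]
          exact cross_symm (cross_to_collapse_aux hrx hr1 hpx hp1 hqx hq1 h')
        · rw [phi_of_ne hpx, phi_of_ne hqx, phi_of_ne hrx, phi_of_ne hsx]
          exact (cross_collapse hpx hqx hrx hsx).1 h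

set_option maxHeartbeats 1600000 in
/-- Let `v` be incident to exactly `n-3-k` interior edges of `T`, let
`U ∈ Ω(T,v)` and let `a` be a shelling of `T` at `v` witnessing it. If `x` is the last
vertex of the shelling or the vertex immediately preceding it clockwise, then
`U∖x ∈ Ω(T∖x, v)`. -/
theorem stmt3 (n k : ℕ) (hn : 4 ≤ n + 2) (hk : 0 < k)
    (T : Triangulation (n + 2)) (v : Fin (n + 2))
    (hdeg : interiorDeg (n + 2) T v + k = (n + 2) - 3)
    (U : Triangulation (n + 2)) (hUmem : U ∈ Omega (n + 2) k T v)
    (a : Fin k → Fin (n + 2)) (hshell : IsShelling (n + 2) k T v a)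
    (hgood : ∀ i : Fin k, GoodAt (n + 2) k U a i)
    (x : Fin (n + 2))
    (hx : x = a ⟨k - 1, by omega⟩ ∨ x = a ⟨k - 1, by omega⟩ - 1)
    (T' U' : Triangulation (n + 1))
    (hT' : T'.edges = deleteEdges n x T.edges)
    (hU' : U'.edges = deleteEdges n x U.edges) :
    U' ∈ Omega (n + 1) (k - 1) T' (collapse n x v) := by
  obtain ⟨hinj, hchar, htri⟩ := hshell
  have hEar : HasEar (n + 2) U v := hUmem.1
  have lastlt : k - 1 < k := by omega
  set lastIdx : Fin k := ⟨k - 1, lastlt⟩ with hlastIdx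
  have hxm : x = a lastIdx ∨ x + 1 = a lastIdx := by
    rcases hx with h | h
    · exact Or.inl h
    · right; rw [h, sub_add_cancel]
  clear hx hUmem hdeg
  have hcard2T : ∀ e ∈ T.edges, e.card = 2 := T.isTri.2.1
  have hcard2U : ∀ e ∈ U.edges, e.card = 2 := U.isTri.2.1
  have hbd : ∀ i : Fin (n + 2), IsBoundary (n + 2) ({i, i + 1} : Finset _) :=
    fun i => isBoundary_pair_succ (by omega) i
  have hbdT : ∀ i : Fin (n + 2), ({i, i + 1} : Finset _) ∈ T.edges :=
    fun i => boundary_mem_tri (by omega) T (hbd i)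
  have hav : ∀ j : Fin k, a j ≠ v := fun j => ((hchar (a j)).1 ⟨j, rfl⟩).1
  have haT : ∀ j : Fin k, ({v, a j} : Finset _) ∉ T.edges :=
    fun j => ((hchar (a j)).1 ⟨j, rfl⟩).2
  have hMv1 : a lastIdx ≠ v + 1 := by
    intro h
    exact haT lastIdx (h ▸ hbdT v)
  have hMvm1 : a lastIdx ≠ v - 1 := by
    intro h
    apply haT lastIdx
    rw [h, Finset.pair_comm]
    have h2 := hbdT (v - 1)
    rw [sub_add_cancel] at h2
    exact h2
  have hvx0 : v ≠ x := by
    rcases hxm with h | h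
    · exact fun hh => hav lastIdx (by rw [← h, ← hh])
    · exact fun hh => hMv1 (by rw [← h, hh])
  have hvx1 : v ≠ x + 1 := by
    rcases hxm with h | h
    · intro hh
      apply hMvm1
      rw [← h, hh, add_sub_cancel_right]
    · exact fun hh => hav lastIdx (by rw [← h, ← hh])
  have hxx1 := fin_succ_ne_self x
  -- the apex edge {M-1, M+1} is not in U
  have hearM : ({a lastIdx - 1, a lastIdx + 1} : Finset _) ∉ U.edges := by
    intro hmem
    obtain ⟨e₁, e₂, he₁, he₂, hne, hi₁, hi₂, hm₁, hm₂, hc₁, hc₂⟩ := hgood lastIdx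
    obtain ⟨w, hwm, he₁r⟩ := edge_rep (hcard2U e₁ he₁) hm₁
    have hw1 : w ≠ a lastIdx + 1 := by
      intro hh
      rw [he₁r, hh] at hi₁
      exact hi₁ (hbd _)
    have hw2 : w ≠ a lastIdx - 1 := by
      intro hh
      apply hi₁
      rw [he₁r, hh, Finset.pair_comm]
      have h2 := hbd (a lastIdx - 1)
      rw [sub_add_cancel] at h2
      exact h2
    have hcross : Cross (n + 2) ({a lastIdx - 1, a lastIdx + 1} : Finset _)
        ({a lastIdx, w} : Finset _) := by
      rw [cross_pair_iff]
      left
      have h1 := fin_sub_one_val (a lastIdx)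
      have h2 : (a lastIdx + 1).val = if (a lastIdx).val + 1 = n + 2 then 0
          else (a lastIdx).val + 1 := fin_add_one_val (by omega) _
      have h3 := fin_val_ne hwm
      have h4 := fin_val_ne hw1
      have h5 := fin_val_ne hw2
      have := (a lastIdx).isLt; have := w.isLt
      constructor <;> (rw [between_iff]; split_ifs at h1 h2 <;> omega)
    rw [he₁r] at he₁
    exact U.isTri.2.2.1 _ hmem _ he₁ hcross
  -- the new shelling
  have hkk : ∀ i : Fin (k - 1), i.val < k := fun i => by have := i.isLt; omega
  set a' : Fin (k - 1) → Fin (n + 1) := fun i => phi n x (a ⟨i.val, hkk i⟩) with ha'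
  -- membership of collapsed edges at v in T'
  have hTmem : ∀ u : Fin (n + 2), u ≠ x →
      (({collapse n x v, phi n x u} : Finset _) ∈ T'.edges ↔
        (({v, u} : Finset _) ∈ T.edges ∨ (u = x + 1 ∧ ({v, x} : Finset _) ∈ T.edges))) := by
    intro u hux
    rw [hT', mem_deleteEdges]
    constructor
    · rintro ⟨e, heT, hnexx, heq⟩
      obtain ⟨p, q, hpq, rfl⟩ := Finset.card_eq_two.1 (hcard2T _ heT)
      rw [image_pair'] at heq
      have main : ∀ p q : Fin (n + 2), ({p, q} : Finset _) ∈ T.edges →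
          collapse n x v = phi n x p → phi n x u = phi n x q →
          (({v, u} : Finset _) ∈ T.edges ∨ (u = x + 1 ∧ ({v, x} : Finset _) ∈ T.edges)) := by
        intro p' q' hmem h1 h2
        have hpv : p' = v := by
          have hpv' : phi n x v = phi n x p' := by rw [← h1, phi_of_ne hvx0]
          rcases phi_eq_phi.1 hpv' with h | ⟨h, -⟩ | ⟨h, -⟩
          · exact h.symm
          · exact absurd h hvx0
          · exact absurd h hvx1
        subst hpv
        rcases phi_eq_phi.1 h2 with h | ⟨h1', -⟩ | ⟨h1', h2'⟩
        · left; rw [h]; exact hmem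
        · exact absurd h1' hux
        · right
          refine ⟨h1', ?_⟩
          rw [← h2']; exact hmem
      rw [pair_eq_pair_iff] at heq
      rcases heq with ⟨h1, h2⟩ | ⟨h1, h2⟩
      · exact main p q heT h1 h2
      · exact main q p (by rw [Finset.pair_comm]; exact heT) h1 h2
    · rintro (hvu | ⟨rfl, hvxT⟩)
      · refine ⟨{v, u}, hvu, ?_, ?_⟩
        · intro hh
          have hv2 : v ∈ ({x, x + 1} : Finset _) := hh ▸ Finset.mem_insert_self v {u}
          simp only [Finset.mem_insert, Finset.mem_singleton] at hv2
          rcases hv2 with h | h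
          · exact hvx0 h
          · exact hvx1 h
        · rw [image_pair', phi_of_ne hvx0]
      · refine ⟨{v, x}, hvxT, ?_, ?_⟩
        · intro hh
          have hv2 : v ∈ ({x, x + 1} : Finset _) := hh ▸ Finset.mem_insert_self v {x}
          simp only [Finset.mem_insert, Finset.mem_singleton] at hv2
          rcases hv2 with h | h
          · exact hvx0 h
          · exact hvx1 h
        · rw [image_pair', phi_of_ne hvx0,
            show phi n x (x + 1) = phi n x x from phi_eq_phi.2 (Or.inr (Or.inr ⟨rfl, rfl⟩))]
  have hane : ∀ jj : Fin k, jj.val < k - 1 → a jj ≠ a lastIdx := by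
    intro jj hjj hh
    rw [hlastIdx] at hh
    have h1 : jj.val = k - 1 := congrArg Fin.val (hinj hh)
    omega
  simp only [Omega, Set.mem_setOf_eq]
  refine ⟨?ear, a', ⟨?inj, ?char, ?tri⟩, ?good⟩
  case ear =>
    intro e' he' hbnd hv'
    rw [hU', mem_deleteEdges] at he'
    obtain ⟨e, heU, hnexx, rfl⟩ := he'
    obtain ⟨w, hwe, hphiw⟩ := Finset.mem_image.1 hv'
    have hwv : w = v := by
      have hh : phi n x w = phi n x v := by rw [hphiw, phi_of_ne hvx0]
      rcases phi_eq_phi.1 hh with h | ⟨-, h⟩ | ⟨-, h⟩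
      · exact h
      · exact absurd h hvx1
      · exact absurd h hvx0
    subst hwv
    have hbe : IsBoundary (n + 2) e := by
      by_contra hne
      exact hEar e heU hne hwe
    exact hbnd (boundary_phi hbe hnexx)
  case inj =>
    intro i j hij
    have hij' : phi n x (a ⟨i.val, hkk i⟩) = phi n x (a ⟨j.val, hkk j⟩) := hij
    have hne1 : ∀ i' : Fin (k - 1), a ⟨i'.val, hkk i'⟩ ≠ a lastIdx := by
      intro i' hh
      rw [hlastIdx] at hh
      have h1 : i'.val = k - 1 := congrArg Fin.val (hinj hh)
      have h2 := i'.isLt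
      omega
    rcases phi_eq_phi.1 hij' with h | ⟨h1, h2⟩ | ⟨h1, h2⟩
    · have hv : i.val = j.val := by
        have hh := hinj h
        simpa using hh
      exact Fin.ext hv
    · exfalso
      rcases hxm with hxm' | hxm'
      · exact hne1 i (h1.trans hxm')
      · exact hne1 j (h2.trans hxm')
    · exfalso
      rcases hxm with hxm' | hxm'
      · exact hne1 j (h2.trans hxm')
      · exact hne1 i (h1.trans hxm')
  case char =>
    intro w'
    constructor
    · rintro ⟨i', rfl⟩
      simp only [ha']
      have hlt' : i'.val < k - 1 := i'.isLt
      by_cases hax : a ⟨i'.val, hkk i'⟩ = x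
      · have h1 : phi n x (a ⟨i'.val, hkk i'⟩) = phi n x (x + 1) := by
          rw [hax, phi, if_pos rfl, phi_of_ne hxx1]
        rw [h1]
        constructor
        · intro hh
          have hh2 : phi n x (x + 1) = phi n x v := by rw [hh, phi_of_ne hvx0]
          rcases phi_eq_phi.1 hh2 with h | ⟨h, -⟩ | ⟨-, h⟩
          · exact hvx1 h.symm
          · exact hxx1 h
          · exact hvx0 h
        · intro hmem
          rcases (hTmem (x + 1) hxx1).1 hmem with hvu | ⟨-, hvxT⟩
          · rcases hxm with hxm' | hxm'
            · exact hane _ hlt' (hax.trans hxm')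
            · exact haT lastIdx (by rw [← hxm']; exact hvu)
          · refine haT ⟨i'.val, hkk i'⟩ ?_
            rw [hax]
            exact hvxT
      · constructor
        · intro hh
          have hh2 : phi n x (a ⟨i'.val, hkk i'⟩) = phi n x v := by
            rw [hh, phi_of_ne hvx0]
          rcases phi_eq_phi.1 hh2 with h | ⟨-, h⟩ | ⟨-, h⟩
          · exact hav _ h
          · exact hvx1 h
          · exact hvx0 h
        · intro hmem
          rcases (hTmem _ hax).1 hmem with hvu | ⟨hx1, hvxT⟩
          · exact haT _ hvu
          · rcases hxm with hxm' | hxm'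
            · exact haT lastIdx (by rw [← hxm']; exact hvxT)
            · exact hane _ hlt' (hx1.trans hxm')
    · rintro ⟨hne, hnmem⟩
      have hu := phi_unc x w'
      have hunex := unc_ne x w'
      have huv : unc x w' ≠ v := by
        intro h
        apply hne
        rw [← hu, h, phi_of_ne hvx0]
      by_cases hvuT : ({v, unc x w'} : Finset _) ∈ T.edges
      · exfalso
        apply hnmem
        rw [← hu]
        exact (hTmem _ hunex).2 (Or.inl hvuT)
      · obtain ⟨j, hj⟩ := (hchar (unc x w')).2 ⟨huv, hvuT⟩
        by_cases hjlt : j.val < k - 1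
        · refine ⟨⟨j.val, hjlt⟩, ?_⟩
          simp only [ha']
          have hjj : (⟨j.val, hkk ⟨j.val, hjlt⟩⟩ : Fin k) = j := Fin.ext rfl
          rw [hjj, hj]
          exact hu
        · have hjl : j = lastIdx := by
            rw [hlastIdx]
            have hjv : j.val = k - 1 := by have := j.isLt; omega
            exact Fin.ext hjv
          rw [hjl] at hj
          rcases hxm with hxm' | hxm'
          · exact absurd (hj.symm.trans hxm'.symm) hunex
          · have hux1 : unc x w' = x + 1 := hj.symm.trans hxm'.symm
            have hvxT : ({v, x} : Finset _) ∉ T.edges := by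
              intro hmm
              apply hnmem
              rw [← hu, hux1]
              exact (hTmem (x + 1) hxx1).2 (Or.inr ⟨rfl, hmm⟩)
            have hxv : x ≠ v := fun h => hvx0 h.symm
            obtain ⟨j₂, hj₂⟩ := (hchar x).2 ⟨hxv, hvxT⟩
            have hj₂lt : j₂.val < k - 1 := by
              by_contra hcon
              have hjl₂ : j₂ = lastIdx := by
                rw [hlastIdx]
                have hjv : j₂.val = k - 1 := by have := j₂.isLt; omega
                exact Fin.ext hjv
              rw [hjl₂] at hj₂
              exact hxx1 (hxm'.trans hj₂)
            refine ⟨⟨j₂.val, hj₂lt⟩, ?_⟩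
            simp only [ha']
            have hjj : (⟨j₂.val, hkk ⟨j₂.val, hj₂lt⟩⟩ : Fin k) = j₂ := Fin.ext rfl
            rw [hjj, hj₂, ← hu, hux1]
            exact phi_eq_phi.2 (Or.inr (Or.inl ⟨rfl, rfl⟩))
  case tri =>
    intro i
    have hile : ∀ j : Fin (k - 1), i ≤ j → (⟨i.val, hkk i⟩ : Fin k) ≤ ⟨j.val, hkk j⟩ := by
      intro j hj
      rw [Fin.mk_le_mk]
      exact Fin.le_def.1 hj
    have hlastle : (⟨i.val, hkk i⟩ : Fin k) ≤ lastIdx := by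
      rw [hlastIdx, Fin.mk_le_mk]
      have := i.isLt
      omega
    obtain ⟨-, -, -, ht4⟩ := htri ⟨i.val, hkk i⟩
    refine ⟨?_, ?_, ?_, ?_⟩
    · intro e' he' w hw
      rw [Finset.mem_filter] at he'
      rw [Finset.mem_filter]
      exact ⟨Finset.mem_univ _, fun j hj hwj => he'.2 j hj (hwj ▸ hw)⟩
    · intro e' he'
      rw [Finset.mem_filter] at he'
      exact T'.isTri.2.1 e' he'.1
    · intro e' he' f' hf'
      rw [Finset.mem_filter] at he' hf'
      exact T'.isTri.2.2.1 e' he'.1 f' hf'.1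
    · intro e' hW' hcard hnc
      obtain ⟨w1, w2, hw12, rfl⟩ := Finset.card_eq_two.1 hcard
      have hW1 : ∀ j : Fin (k - 1), i ≤ j → w1 ≠ a' j :=
        (Finset.mem_filter.1 (hW' (Finset.mem_insert_self w1 {w2}))).2
      have hW2 : ∀ j : Fin (k - 1), i ≤ j → w2 ≠ a' j :=
        (Finset.mem_filter.1 (hW' (by simp))).2
      rw [Finset.mem_filter]
      have hfin : ∀ j : Fin (k - 1), i ≤ j → a' j ∉ ({w1, w2} : Finset _) := by
        intro j hj hmem
        simp only [Finset.mem_insert, Finset.mem_singleton] at hmem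
        rcases hmem with h | h
        · exact hW1 j hj h.symm
        · exact hW2 j hj h.symm
      refine ⟨?_, hfin⟩
      rcases hxm with hxm' | hxm'
      · -- Branch A : x = a lastIdx
        have hp1 := phi_unc x w1
        have hp2 := phi_unc x w2
        have hu1x := unc_ne x w1
        have hu2x := unc_ne x w2
        have hu12 : unc x w1 ≠ unc x w2 := fun h => hw12 (by rw [← hp1, ← hp2, h])
        have hkey : ∀ (w : Fin (n + 1)) (uu : Fin (n + 2)), phi n x uu = w → uu ≠ x →
            (∀ j : Fin (k - 1), i ≤ j → w ≠ a' j) →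
            ∀ j : Fin k, (⟨i.val, hkk i⟩ : Fin k) ≤ j → uu ≠ a j := by
          intro w uu hpw hux hwa j hj huj
          by_cases hjlt : j.val < k - 1
          · refine hwa ⟨j.val, hjlt⟩ (by rw [Fin.le_def]; exact Fin.le_def.1 hj) ?_
            simp only [ha']
            rw [show (⟨(⟨j.val, hjlt⟩ : Fin (k - 1)).val, hkk ⟨j.val, hjlt⟩⟩ : Fin k) = j from
              Fin.ext rfl, ← huj, hpw]
          · have hjl : j = lastIdx := by
              rw [hlastIdx]
              have hjv : j.val = k - 1 := by have := j.isLt; omega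
              exact Fin.ext hjv
            rw [hjl] at huj
            exact hux (huj.trans hxm'.symm)
        have hsubW : ({unc x w1, unc x w2} : Finset _) ⊆ Finset.univ.filter
            (fun w => ∀ j, (⟨i.val, hkk i⟩ : Fin k) ≤ j → w ≠ a j) := by
          intro z hz
          rw [Finset.mem_filter]
          refine ⟨Finset.mem_univ _, ?_⟩
          simp only [Finset.mem_insert, Finset.mem_singleton] at hz
          rcases hz with rfl | rfl
          · exact hkey w1 _ hp1 hu1x hW1
          · exact hkey w2 _ hp2 hu2x hW2
        have hnc' : ∀ f ∈ T.edges.filter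
            (fun e => ∀ j, (⟨i.val, hkk i⟩ : Fin k) ≤ j → a j ∉ e),
            ¬ Cross (n + 2) ({unc x w1, unc x w2} : Finset _) f := by
          intro f hf hcr
          rw [Finset.mem_filter] at hf
          obtain ⟨hfT, hfav⟩ := hf
          have hfx : x ∉ f := fun hh => hfav lastIdx hlastle (hxm' ▸ hh)
          obtain ⟨c, d, hcd, rfl⟩ := Finset.card_eq_two.1 (hcard2T _ hfT)
          have hcx : c ≠ x := fun h => hfx (by rw [← h]; exact Finset.mem_insert_self c {d})
          have hdx : d ≠ x := fun h => hfx (by rw [← h]; simp)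
          have hcr2 : Cross (n + 1) ({w1, w2} : Finset _) {phi n x c, phi n x d} := by
            rw [← hp1, ← hp2, phi_of_ne hu1x, phi_of_ne hu2x, phi_of_ne hcx, phi_of_ne hdx]
            exact (cross_collapse hu1x hu2x hcx hdx).1 hcr
          refine hnc ({phi n x c, phi n x d}) ?_ hcr2
          rw [Finset.mem_filter]
          constructor
          · rw [hT', mem_deleteEdges]
            refine ⟨{c, d}, hfT, ?_, (image_pair' _ _ _).symm⟩
            intro hh
            exact hfx (by rw [hh]; exact Finset.mem_insert_self x {x + 1})
          · intro j hj hmem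
            have hgen : ∀ z ∈ ({c, d} : Finset _), a' j ≠ phi n x z := by
              intro z hz heq
              have heq2 : phi n x (a ⟨j.val, hkk j⟩) = phi n x z := heq
              have hzx : z ≠ x := by
                simp only [Finset.mem_insert, Finset.mem_singleton] at hz
                rcases hz with rfl | rfl
                · exact hcx
                · exact hdx
              rcases phi_eq_phi.1 heq2 with h | ⟨h1, -⟩ | ⟨-, h2⟩
              · exact hfav ⟨j.val, hkk j⟩ (hile j hj) (h ▸ hz)
              · exact hane ⟨j.val, hkk j⟩ j.isLt (h1.trans hxm')
              · exact hzx h2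
            simp only [Finset.mem_insert, Finset.mem_singleton] at hmem
            rcases hmem with h | h
            · exact hgen c (by simp) h
            · exact hgen d (by simp) h
        have hmax := ht4 _ hsubW (Finset.card_pair hu12) hnc'
        rw [Finset.mem_filter] at hmax
        rw [hT', mem_deleteEdges]
        refine ⟨{unc x w1, unc x w2}, hmax.1, ?_, ?_⟩
        · intro hh
          have hxmem : x ∈ ({unc x w1, unc x w2} : Finset _) := by
            rw [hh]; exact Finset.mem_insert_self x {x + 1}
          simp only [Finset.mem_insert, Finset.mem_singleton] at hxmem
          rcases hxmem with h | h
          · exact hu1x h.symm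
          · exact hu2x h.symm
        · rw [image_pair', hp1, hp2]
      · -- Branch B : x + 1 = a lastIdx
        have hmux : ∀ w : Fin (n + 1), phi n x (if w = phi n x x then x else unc x w) = w := by
          intro w
          split_ifs with h
          · exact h.symm
          · exact phi_unc x w
        have hmuM : ∀ w : Fin (n + 1), (if w = phi n x x then x else unc x w) ≠ x + 1 := by
          intro w
          split_ifs with h
          · exact fun hh => hxx1 hh.symm
          · intro hh
            apply h
            rw [← phi_unc x w, hh]
            exact phi_eq_phi.2 (Or.inr (Or.inr ⟨rfl, rfl⟩))
        set u1 := if w1 = phi n x x then x else unc x w1 with hu1d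
        set u2 := if w2 = phi n x x then x else unc x w2 with hu2d
        have hp1 : phi n x u1 = w1 := by rw [hu1d]; exact hmux w1
        have hp2 : phi n x u2 = w2 := by rw [hu2d]; exact hmux w2
        have hu1M : u1 ≠ x + 1 := by rw [hu1d]; exact hmuM w1
        have hu2M : u2 ≠ x + 1 := by rw [hu2d]; exact hmuM w2
        have hu12 : u1 ≠ u2 := fun h => hw12 (by rw [← hp1, ← hp2, h])
        have hkey : ∀ (w : Fin (n + 1)) (uu : Fin (n + 2)), phi n x uu = w → uu ≠ x + 1 →
            (∀ j : Fin (k - 1), i ≤ j → w ≠ a' j) →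
            ∀ j : Fin k, (⟨i.val, hkk i⟩ : Fin k) ≤ j → uu ≠ a j := by
          intro w uu hpw hux hwa j hj huj
          by_cases hjlt : j.val < k - 1
          · refine hwa ⟨j.val, hjlt⟩ (by rw [Fin.le_def]; exact Fin.le_def.1 hj) ?_
            simp only [ha']
            rw [show (⟨(⟨j.val, hjlt⟩ : Fin (k - 1)).val, hkk ⟨j.val, hjlt⟩⟩ : Fin k) = j from
              Fin.ext rfl, ← huj, hpw]
          · have hjl : j = lastIdx := by
              rw [hlastIdx]
              have hjv : j.val = k - 1 := by have := j.isLt; omega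
              exact Fin.ext hjv
            rw [hjl] at huj
            exact hux (huj.trans hxm'.symm)
        have hsubW : ({u1, u2} : Finset _) ⊆ Finset.univ.filter
            (fun w => ∀ j, (⟨i.val, hkk i⟩ : Fin k) ≤ j → w ≠ a j) := by
          intro z hz
          rw [Finset.mem_filter]
          refine ⟨Finset.mem_univ _, ?_⟩
          simp only [Finset.mem_insert, Finset.mem_singleton] at hz
          rcases hz with rfl | rfl
          · exact hkey w1 _ hp1 hu1M hW1
          · exact hkey w2 _ hp2 hu2M hW2
        have hnc' : ∀ f ∈ T.edges.filter
            (fun e => ∀ j, (⟨i.val, hkk i⟩ : Fin k) ≤ j → a j ∉ e),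
            ¬ Cross (n + 2) ({u1, u2} : Finset _) f := by
          intro f hf hcr
          rw [Finset.mem_filter] at hf
          obtain ⟨hfT, hfav⟩ := hf
          have hfM : x + 1 ∉ f := fun hh => hfav lastIdx hlastle (hxm' ▸ hh)
          obtain ⟨c, d, hcd, rfl⟩ := Finset.card_eq_two.1 (hcard2T _ hfT)
          have hcM : c ≠ x + 1 := fun h => hfM (by rw [← h]; exact Finset.mem_insert_self c {d})
          have hdM : d ≠ x + 1 := fun h => hfM (by rw [← h]; simp)
          have hcr2 : Cross (n + 1) ({w1, w2} : Finset _) {phi n x c, phi n x d} := by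
            rw [← hp1, ← hp2]
            exact cross_to_collapse hu1M hu2M hcM hdM
              (fun h => hu12 (h.1.trans h.2.symm)) (fun h => hcd (h.1.trans h.2.symm)) hcr
          refine hnc ({phi n x c, phi n x d}) ?_ hcr2
          rw [Finset.mem_filter]
          constructor
          · rw [hT', mem_deleteEdges]
            refine ⟨{c, d}, hfT, ?_, (image_pair' _ _ _).symm⟩
            intro hh
            exact hfM (by rw [hh]; simp)
          · intro j hj hmem
            have hgen : ∀ z ∈ ({c, d} : Finset _), a' j ≠ phi n x z := by
              intro z hz heq
              have heq2 : phi n x (a ⟨j.val, hkk j⟩) = phi n x z := heq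
              have hzM : z ≠ x + 1 := by
                simp only [Finset.mem_insert, Finset.mem_singleton] at hz
                rcases hz with rfl | rfl
                · exact hcM
                · exact hdM
              rcases phi_eq_phi.1 heq2 with h | ⟨-, h2⟩ | ⟨h1, -⟩
              · exact hfav ⟨j.val, hkk j⟩ (hile j hj) (h ▸ hz)
              · exact hzM h2
              · exact hane ⟨j.val, hkk j⟩ j.isLt (h1.trans hxm')
            simp only [Finset.mem_insert, Finset.mem_singleton] at hmem
            rcases hmem with h | h
            · exact hgen c (by simp) h
            · exact hgen d (by simp) h
        have hmax := ht4 _ hsubW (Finset.card_pair hu12) hnc'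
        rw [Finset.mem_filter] at hmax
        rw [hT', mem_deleteEdges]
        refine ⟨{u1, u2}, hmax.1, ?_, ?_⟩
        · intro hh
          have hxmem : x + 1 ∈ ({u1, u2} : Finset _) := by
            rw [hh]; simp
          simp only [Finset.mem_insert, Finset.mem_singleton] at hxmem
          rcases hxmem with h | h
          · exact hu1M h.symm
          · exact hu2M h.symm
        · rw [image_pair', hp1, hp2]
  case good =>
    intro i
    obtain ⟨e₁, e₂, he₁, he₂, hne, hb₁, hb₂, hm₁, hm₂, hc₁, hc₂⟩ := hgood ⟨i.val, hkk i⟩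
    obtain ⟨w₁, hw₁ne, he₁r⟩ := edge_rep (hcard2U _ he₁) hm₁
    obtain ⟨w₂, hw₂ne, he₂r⟩ := edge_rep (hcard2U _ he₂) hm₂
    have hilast : (⟨i.val, hkk i⟩ : Fin k) ≤ lastIdx := by
      rw [hlastIdx, Fin.mk_le_mk]
      have := i.isLt
      omega
    have hv₁ : ∀ j : Fin k, (⟨i.val, hkk i⟩ : Fin k) ≤ j → w₁ ≠ a j := by
      intro j hj
      exact hc₁ w₁ (by rw [he₁r]; simp) hw₁ne j hj
    have hv₂ : ∀ j : Fin k, (⟨i.val, hkk i⟩ : Fin k) ≤ j → w₂ ≠ a j := by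
      intro j hj
      exact hc₂ w₂ (by rw [he₂r]; simp) hw₂ne j hj
    have hw₁M : w₁ ≠ a lastIdx := hv₁ lastIdx hilast
    have hw₂M : w₂ ≠ a lastIdx := hv₂ lastIdx hilast
    have haciM : a ⟨i.val, hkk i⟩ ≠ a lastIdx := hane ⟨i.val, hkk i⟩ i.isLt
    -- the merged-boundary edges are not in U
    have hW1W2 : ∀ e ∈ U.edges, ¬ IsBoundary (n + 2) e → e ≠ {x, x + 1} →
        (∀ w ∈ e, w ≠ a lastIdx) → ¬ IsBoundary (n + 1) (e.image (phi n x)) := by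
      intro e heU hbe hexx heM hbnd
      obtain ⟨p, q, hpq, rfl⟩ := Finset.card_eq_two.1 (hcard2U _ heU)
      rcases hxm with hxm' | hxm'
      · -- x = a lastIdx : p, q ≠ x
        have hpx : p ≠ x := fun h => heM p (by simp) (h.trans hxm')
        have hqx : q ≠ x := fun h => heM q (by simp) (h.trans hxm')
        rw [image_pair', phi_of_ne hpx, phi_of_ne hqx] at hbnd
        rcases boundary_collapse_rev hpx hqx hpq hbnd with h | h
        · exact hbe h
        · -- {p,q} = {x-1, x+1} = {a lastIdx - 1, a lastIdx + 1} ∈ U.edges : contra hearM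
          apply hearM
          rw [← hxm', ← h]
          exact heU
      · -- x + 1 = a lastIdx : p, q ≠ x + 1
        have hpM : p ≠ x + 1 := fun h => heM p (by simp) (h.trans hxm')
        have hqM : q ≠ x + 1 := fun h => heM q (by simp) (h.trans hxm')
        by_cases hpx : p = x
        · have hqx : q ≠ x := fun h => hpq (hpx.trans h.symm)
          rw [image_pair', phi_of_ne hqx] at hbnd
          rw [show phi n x p = collapse n x (x + 1) by rw [phi, if_pos hpx]] at hbnd
          rcases boundary_collapse_rev hxx1 hqx (fun h => hqM h.symm) hbnd with h | h
          · -- {x+1, q} boundary : q = x+2 or q = x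
            rcases boundary_pair_cases (by omega) h (fun hh => hqM hh.symm) with h2 | h2
            · -- q = (x+1)+1 : e = {x, x+2} = {M-1, M+1}
              apply hearM
              rw [← hxm', add_sub_cancel_right, ← h2, ← hpx]
              exact heU
            · -- x + 1 = q + 1 : q = x
              exact hqx (by
                have := congrArg (fun z => z - 1) h2
                simpa [add_sub_cancel_right] using this.symm)
          · -- {x+1, q} = {x-1, x+1} : q = x - 1, e = {x, x-1} boundary
            rw [pair_eq_pair_iff] at h
            rcases h with ⟨h1, -⟩ | ⟨-, h2⟩
            · -- x + 1 = x - 1... derive q = x -1 from second comp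
              exact absurd h1 (by
                intro hh
                have h3 := congrArg (fun z => z + 1) hh
                simp only [sub_add_cancel] at h3
                -- x + 1 + 1 = x : impossible
                have h4 := congrArg Fin.val h3
                rw [fin_add_one_val (by omega), fin_add_one_val (by omega)] at h4
                have := x.isLt
                split_ifs at h4 <;> omega)
            · apply hbe
              rw [h2, hpx]
              have hb := hbd (x - 1)
              rw [sub_add_cancel] at hb
              rw [Finset.pair_comm]
              exact hb
        · by_cases hqx : q = x
          · rw [image_pair', phi_of_ne hpx] at hbnd
            rw [show phi n x q = collapse n x (x + 1) by rw [phi, if_pos hqx]] at hbnd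
            rw [Finset.pair_comm] at hbnd
            rcases boundary_collapse_rev hxx1 hpx (fun h => hpM h.symm) hbnd with h | h
            · rcases boundary_pair_cases (by omega) h (fun hh => hpM hh.symm) with h2 | h2
              · apply hearM
                rw [← hxm', add_sub_cancel_right, ← h2, ← hqx, Finset.pair_comm]
                exact heU
              · exact hpx (by
                  have := congrArg (fun z => z - 1) h2
                  simpa [add_sub_cancel_right] using this.symm)
            · rw [pair_eq_pair_iff] at h
              rcases h with ⟨h1, -⟩ | ⟨-, h2⟩
              · exact absurd h1 (by
                  intro hh
                  have h3 := congrArg (fun z => z + 1) hh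
                  simp only [sub_add_cancel] at h3
                  have h4 := congrArg Fin.val h3
                  rw [fin_add_one_val (by omega), fin_add_one_val (by omega)] at h4
                  have := x.isLt
                  split_ifs at h4 <;> omega)
              · apply hbe
                rw [h2, hqx, Finset.pair_comm]
                have hb := hbd (x - 1)
                rw [sub_add_cancel] at hb
                rw [Finset.pair_comm]
                exact hb
          · rw [image_pair', phi_of_ne hpx, phi_of_ne hqx] at hbnd
            rcases boundary_collapse_rev hpx hqx hpq hbnd with h | h
            · exact hbe h
            · -- {p, q} = {x-1, x+1} : but x+1 = a lastIdx ∉ e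
              have hxmem : x + 1 ∈ ({p, q} : Finset _) := by rw [h]; simp
              simp only [Finset.mem_insert, Finset.mem_singleton] at hxmem
              rcases hxmem with hh | hh
              · exact hpM hh.symm
              · exact hqM hh.symm
    -- e ≠ {x, x+1}
    have hexx : ∀ e ∈ U.edges, (∀ w ∈ e, w ≠ a lastIdx) → e ≠ ({x, x + 1} : Finset _) := by
      intro e heU heM hh
      rcases hxm with hxm' | hxm'
      · exact heM x (by rw [hh]; exact Finset.mem_insert_self x {x + 1}) hxm'
      · exact heM (x + 1) (by rw [hh]; simp) hxm'
    have hM₁ : ∀ w ∈ e₁, w ≠ a lastIdx := by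
      intro w hw
      rw [he₁r] at hw
      simp only [Finset.mem_insert, Finset.mem_singleton] at hw
      rcases hw with rfl | rfl
      · exact haciM
      · exact hw₁M
    have hM₂ : ∀ w ∈ e₂, w ≠ a lastIdx := by
      intro w hw
      rw [he₂r] at hw
      simp only [Finset.mem_insert, Finset.mem_singleton] at hw
      rcases hw with rfl | rfl
      · exact haciM
      · exact hw₂M
    refine ⟨e₁.image (phi n x), e₂.image (phi n x), ?_, ?_, ?_, ?_, ?_, ?_, ?_, ?_, ?_⟩
    · rw [hU', mem_deleteEdges]
      exact ⟨e₁, he₁, hexx _ he₁ hM₁, rfl⟩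
    · rw [hU', mem_deleteEdges]
      exact ⟨e₂, he₂, hexx _ he₂ hM₂, rfl⟩
    · -- distinct images
      intro hh
      rw [he₁r, he₂r, image_pair', image_pair'] at hh
      rw [pair_eq_pair_iff] at hh
      have haM' : ∀ z : Fin (n + 2), z ≠ a lastIdx → z ≠ a ⟨i.val, hkk i⟩ →
          phi n x z = phi n x (a ⟨i.val, hkk i⟩) → False := by
        intro z hzM hza hphi
        rcases phi_eq_phi.1 hphi with h | ⟨h1, h2⟩ | ⟨h1, h2⟩
        · exact hza h
        · rcases hxm with hxm' | hxm'
          · exact hzM (h1.trans hxm')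
          · exact hane ⟨i.val, hkk i⟩ i.isLt (h2.trans hxm')
        · rcases hxm with hxm' | hxm'
          · exact hane ⟨i.val, hkk i⟩ i.isLt (h2.trans hxm')
          · exact hzM (h1.trans hxm')
      rcases hh with ⟨-, h2⟩ | ⟨h1, h2⟩
      · -- phi w₁ = phi w₂ : w₁ = w₂
        have hww : w₁ = w₂ := by
          rcases phi_eq_phi.1 h2 with h | ⟨hh1, hh2⟩ | ⟨hh1, hh2⟩
          · exact h
          · exfalso
            rcases hxm with hxm' | hxm'
            · exact hw₁M (hh1.trans hxm')
            · exact hw₂M (hh2.trans hxm')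
          · exfalso
            rcases hxm with hxm' | hxm'
            · exact hw₂M (hh2.trans hxm')
            · exact hw₁M (hh1.trans hxm')
        exact hne (by rw [he₁r, he₂r, hww])
      · -- phi (a ci) = phi w₂ and phi w₁ = phi (a ci)
        exact haM' w₁ hw₁M hw₁ne h2
    · exact hW1W2 e₁ he₁ hb₁ (hexx _ he₁ hM₁) hM₁
    · exact hW1W2 e₂ he₂ hb₂ (hexx _ he₂ hM₂) hM₂
    · simp only [ha']
      exact Finset.mem_image_of_mem _ hm₁
    · simp only [ha']
      exact Finset.mem_image_of_mem _ hm₂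
    · -- endpoint condition for e₁
      intro w' hw' hwne j hj heq
      obtain ⟨z, hz, hphz⟩ := Finset.mem_image.1 hw'
      rw [he₁r] at hz
      simp only [Finset.mem_insert, Finset.mem_singleton] at hz
      rcases hz with rfl | rfl
      · exact hwne (by rw [← hphz])
      · -- z = w₁ : phi w₁ = phi (a cj)
        have heq2 : phi n x z = phi n x (a ⟨j.val, hkk j⟩) := by
          rw [hphz, heq]
        have hjle : (⟨i.val, hkk i⟩ : Fin k) ≤ ⟨j.val, hkk j⟩ := by
          rw [Fin.mk_le_mk]
          exact Fin.le_def.1 hj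
        rcases phi_eq_phi.1 heq2 with h | ⟨h1, h2⟩ | ⟨h1, h2⟩
        · exact hv₁ ⟨j.val, hkk j⟩ hjle h
        · rcases hxm with hxm' | hxm'
          · exact hv₁ lastIdx hilast (h1.trans hxm')
          · exact hane ⟨j.val, hkk j⟩ j.isLt (h2.trans hxm')
        · rcases hxm with hxm' | hxm'
          · exact hane ⟨j.val, hkk j⟩ j.isLt (h2.trans hxm')
          · exact hv₁ lastIdx hilast (h1.trans hxm')
    · -- endpoint condition for e₂
      intro w' hw' hwne j hj heq
      obtain ⟨z, hz, hphz⟩ := Finset.mem_image.1 hw'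
      rw [he₂r] at hz
      simp only [Finset.mem_insert, Finset.mem_singleton] at hz
      rcases hz with rfl | rfl
      · exact hwne (by rw [← hphz])
      · have heq2 : phi n x z = phi n x (a ⟨j.val, hkk j⟩) := by
          rw [hphz, heq]
        have hjle : (⟨i.val, hkk i⟩ : Fin k) ≤ ⟨j.val, hkk j⟩ := by
          rw [Fin.mk_le_mk]
          exact Fin.le_def.1 hj
        rcases phi_eq_phi.1 heq2 with h | ⟨h1, h2⟩ | ⟨h1, h2⟩
        · exact hv₂ ⟨j.val, hkk j⟩ hjle h
        · rcases hxm with hxm' | hxm'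
          · exact hv₂ lastIdx hilast (h1.trans hxm')
          · exact hane ⟨j.val, hkk j⟩ j.isLt (h2.trans hxm')
        · rcases hxm with hxm' | hxm'
          · exact hane ⟨j.val, hkk j⟩ j.isLt (h2.trans hxm')
          · exact hv₂ lastIdx hilast (h1.trans hxm')
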